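/- Let G be a polycyclic group and φ, ψ endomorphisms of G, with φ̄, ψ̄ the induced endomorphisms on the abelianization G/G'. Then R(φ,ψ) is finite if and only if R(φ̄,ψ̄) is finite and R(ι_g∘φ|_{G'}, ψ|_{G'}) is finite for every g ∈ G. -/

import Mathlib

/-- A subnormal series of `G` with cyclic factors, witnessing that `G` is polycyclic. -/
structure PolySeries (G : Type*) [Group G] where
  n : ℕ
  s : Fin (n + 1) → Subgroup G
  bot : s 0 = ⊥
  top : s (Fin.last n) = ⊤
  le : ∀ i : Fin n, s i.castSucc ≤ s i.succ
  normal : ∀ i : Fin n, ((s i.castSucc).subgroupOf (s i.succ)).Normal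
  cyclic : ∀ i : Fin n, ∃ x : s i.succ, ∀ y : s i.succ, ∃ k : ℤ,
    y * (x ^ k)⁻¹ ∈ (s i.castSucc).subgroupOf (s i.succ)

/-- The commutator subgroup is fully invariant. -/
theorem apply_mem_commutator {G : Type*} [Group G] (φ : G →* G) {g : G}
    (h : g ∈ commutator G) : φ g ∈ commutator G := by
  have h2 : φ g ∈ (commutator G).map φ := Subgroup.mem_map_of_mem φ h
  rw [commutator_def, Subgroup.map_commutator] at h2
  exact Subgroup.commutator_mono le_top le_top h2

/-- The restriction of an endomorphism to the commutator subgroup. -/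
def restrictCommutator {G : Type*} [Group G] (φ : G →* G) :
    commutator G →* commutator G :=
  (φ.domRestrict (commutator G)).codRestrict (commutator G)
    (fun x => apply_mem_commutator φ x.2)

/-- The endomorphism induced on the abelianisation G/G'. -/
def abelianizationMap {G : Type*} [Group G] (φ : G →* G) :
    (G ⧸ commutator G) →* (G ⧸ commutator G) :=
  QuotientGroup.map (commutator G) (commutator G) φ
    (fun _ hx => apply_mem_commutator φ hx)

/-- The (φ,ψ)-twisted conjugacy relation. -/
def twistRel {G : Type*} [Group G] (φ ψ : G →* G) : G → G → Prop :=
  fun a b => ∃ h : G, a = ψ h * b * (φ h)⁻¹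

section TwistAux

variable {G : Type*} [Group G]

theorem twistRel_equivalence (φ ψ : G →* G) : Equivalence (twistRel φ ψ) := by
  constructor
  · intro a; exact ⟨1, by simp⟩
  · rintro a b ⟨h, rfl⟩
    exact ⟨h⁻¹, by simp [mul_assoc]⟩
  · rintro a b c ⟨h, rfl⟩ ⟨k, rfl⟩
    exact ⟨h * k, by simp [mul_assoc]⟩

theorem twist_mk_eq {φ ψ : G →* G} {a b : G} :
    Quot.mk (twistRel φ ψ) a = Quot.mk (twistRel φ ψ) b ↔ twistRel φ ψ a b :=
  Quot.eq.trans (twistRel_equivalence φ ψ).eqvGen_iff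

theorem finite_twist_quot_of_surjective {H : Type*} [Group H]
    (φ ψ : G →* G) (φ' ψ' : H →* H) (π : G →* H) (hπ : Function.Surjective π)
    (hφ : ∀ x, π (φ x) = φ' (π x)) (hψ : ∀ x, π (ψ x) = ψ' (π x))
    (hfin : Finite (Quot (twistRel φ ψ))) : Finite (Quot (twistRel φ' ψ')) := by
  have hsound : ∀ a b : G, twistRel φ ψ a b →
      Quot.mk (twistRel φ' ψ') (π a) = Quot.mk (twistRel φ' ψ') (π b) := by
    rintro a b ⟨h, rfl⟩
    exact Quot.sound ⟨π h, by simp [hφ, hψ, map_mul]⟩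
  let F : Quot (twistRel φ ψ) → Quot (twistRel φ' ψ') :=
    Quot.lift (fun a => Quot.mk _ (π a)) hsound
  have hF : Function.Surjective F := by
    intro x
    induction x using Quot.ind with
    | _ b =>
      obtain ⟨a, rfl⟩ := hπ b
      exact ⟨Quot.mk _ a, rfl⟩
  exact Finite.of_surjective F hF

open scoped commutatorElement in
theorem quot_commutator_comm (a b : G ⧸ commutator G) : a * b = b * a := by
  induction a using QuotientGroup.induction_on with
  | _ x =>
  induction b using QuotientGroup.induction_on with
  | _ y =>
  have h1 : ((x * y : G) : G ⧸ commutator G) = ((y * x : G) : G ⧸ commutator G) := by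
    rw [QuotientGroup.eq]
    have h2 : ⁅y⁻¹, x⁻¹⁆ ∈ commutator G := by
      rw [commutator_def]
      exact Subgroup.commutator_mem_commutator (Subgroup.mem_top _) (Subgroup.mem_top _)
    have h3 : (x * y)⁻¹ * (y * x) = ⁅y⁻¹, x⁻¹⁆ := by
      rw [commutatorElement_def]; group
    rwa [h3]
  simpa using h1

theorem mk_abelianizationMap (φ : G →* G) (x : G) :
    ((φ x : G) : G ⧸ commutator G) = abelianizationMap φ ((x : G) : G ⧸ commutator G) :=
  rfl

theorem coe_restrictCommutator_conj (φ : G →* G) (g : G) (u : commutator G) :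
    ((restrictCommutator ((MulAut.conj g).toMonoidHom.comp φ) u : G)) = g * φ (u : G) * g⁻¹ :=
  rfl

theorem coe_restrictCommutator (ψ : G →* G) (u : commutator G) :
    ((restrictCommutator ψ u : G)) = ψ (u : G) :=
  rfl

/-- A twisted-conjugacy relation in the commutator subgroup, with the conjugated
endomorphism, gives rise to a twisted-conjugacy relation in `G` after right-multiplying
by the conjugating element. -/
theorem twistRel_mul_of_twistRel_commutator (φ ψ : G →* G) (g : G) {m m' : commutator G}
    (hr : twistRel (restrictCommutator ((MulAut.conj g).toMonoidHom.comp φ))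
      (restrictCommutator ψ) m m') :
    twistRel φ ψ ((m : G) * g) ((m' : G) * g) := by
  obtain ⟨u, hu⟩ := hr
  refine ⟨(u : G), ?_⟩
  have h1 : (m : G) = ψ (u : G) * (m' : G) * (g * φ (u : G) * g⁻¹)⁻¹ := by
    rw [hu]
    push_cast
    rw [coe_restrictCommutator, coe_restrictCommutator_conj]
  rw [h1]; group

end TwistAux

section FGAux

theorem polySeries_fg {G : Type*} [Group G] (p : PolySeries G) : Group.FG G := by
  have key : ∀ i : Fin (p.n + 1), (p.s i).FG := by
    intro i
    induction i using Fin.induction with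
    | zero =>
      rw [p.bot]
      exact ⟨∅, by simp⟩
    | succ i ih =>
      classical
      obtain ⟨x, hx⟩ := p.cyclic i
      obtain ⟨S, hS⟩ := ih
      refine ⟨insert (x : G) S, le_antisymm ?_ ?_⟩
      · rw [Subgroup.closure_le]
        intro y hy
        rcases Finset.mem_insert.mp (Finset.mem_coe.mp hy) with h | h
        · exact h ▸ x.2
        · exact p.le i (hS ▸ Subgroup.subset_closure (Finset.mem_coe.mpr h))
      · intro y hy
        obtain ⟨k, hk⟩ := hx ⟨y, hy⟩
        rw [Subgroup.mem_subgroupOf] at hk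
        have hco : ((⟨y, hy⟩ * (x ^ k)⁻¹ : p.s i.succ) : G) = y * ((x : G) ^ k)⁻¹ := by
          push_cast; rfl
        rw [hco] at hk
        have h1 : y * ((x : G) ^ k)⁻¹ ∈ Subgroup.closure (↑(insert (x : G) S) : Set G) := by
          have hsub : (p.s i.castSucc : Set G) ⊆
              Subgroup.closure (↑(insert (x : G) S) : Set G) := by
            rw [← hS]
            apply Subgroup.closure_mono
            intro z hz
            simp only [Finset.coe_insert, Set.mem_insert_iff]
            exact Or.inr hz
          exact hsub hk
        have h2 : (x : G) ^ k ∈ Subgroup.closure (↑(insert (x : G) S) : Set G) :=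
          zpow_mem (Subgroup.subset_closure (by simp)) k
        simpa using mul_mem h1 h2
  have htop := key (Fin.last p.n)
  rw [p.top] at htop
  obtain ⟨S, hS⟩ := htop
  exact Group.fg_iff.mpr ⟨↑S, hS, S.finite_toSet⟩

end FGAux

section ModuleAux

variable {M : Type*} [AddCommGroup M]

theorem quot_mk_out {p : Submodule ℤ M} (x : M ⧸ p) : Submodule.Quotient.mk x.out = x :=
  Quotient.out_eq' x

theorem finite_quotient_map (h : M →ₗ[ℤ] M) (p : Submodule ℤ M)
    (h1 : Finite (M ⧸ LinearMap.range h)) (h2 : Finite (M ⧸ p)) :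
    Finite (M ⧸ p.map h) := by
  have hs : Function.Surjective (fun cd : (M ⧸ LinearMap.range h) × (M ⧸ p) =>
      (Submodule.Quotient.mk (cd.1.out + h cd.2.out) : M ⧸ p.map h)) := by
    intro x
    obtain ⟨y, rfl⟩ := Submodule.Quotient.mk_surjective _ x
    set c : M ⧸ LinearMap.range h := Submodule.Quotient.mk y with hc
    have hc1 : c.out - y ∈ LinearMap.range h := by
      rw [← Submodule.Quotient.eq, quot_mk_out]
    obtain ⟨z, hz⟩ := hc1
    set d : M ⧸ p := Submodule.Quotient.mk (-z) with hd
    refine ⟨(c, d), ?_⟩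
    simp only
    rw [Submodule.Quotient.eq]
    have hd1 : d.out - (-z) ∈ p := by
      rw [← Submodule.Quotient.eq, quot_mk_out]
    refine ⟨d.out + z, by simpa using hd1, ?_⟩
    rw [map_add, hz]
    abel
  exact Finite.of_surjective _ hs

theorem finite_quotient_pow (f : M →ₗ[ℤ] M)
    (h1 : Finite (M ⧸ LinearMap.range f)) (n : ℕ) :
    Finite (M ⧸ LinearMap.range (f ^ n)) := by
  induction n with
  | zero =>
    have htop : LinearMap.range ((f ^ 0 : M →ₗ[ℤ] M)) = ⊤ := by
      rw [LinearMap.range_eq_top]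
      exact fun x => ⟨x, rfl⟩
    rw [htop]
    have : Subsingleton (M ⧸ (⊤ : Submodule ℤ M)) :=
      Submodule.Quotient.subsingleton_iff.mpr rfl
    exact Finite.of_subsingleton
  | succ n ih =>
    have hr : LinearMap.range (f ^ (n + 1)) = (LinearMap.range f).map (f ^ n) := by
      rw [pow_succ, Module.End.mul_eq_comp, LinearMap.range_comp]
    rw [hr]
    exact finite_quotient_map (f ^ n) (LinearMap.range f) ih h1

theorem finite_ker_of_finite_coker [Module.Finite ℤ M]
    (f : M →ₗ[ℤ] M) (h1 : Finite (M ⧸ LinearMap.range f)) :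
    Finite (LinearMap.ker f) := by
  haveI : IsNoetherian ℤ M := inferInstance
  obtain ⟨n, hn1, hn2⟩ := ((Filter.eventually_ge_atTop 1).and
    (Module.End.eventually_disjoint_ker_pow_range_pow f)).exists
  haveI hfin : Finite (M ⧸ LinearMap.range (f ^ n)) := finite_quotient_pow f h1 n
  have hinj : Function.Injective (fun x : LinearMap.ker f =>
      (Submodule.Quotient.mk (x : M) : M ⧸ LinearMap.range (f ^ n))) := by
    intro x y hxy
    simp only at hxy
    rw [Submodule.Quotient.eq] at hxy
    have hk : (x : M) - y ∈ LinearMap.ker (f ^ n) := by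
      rw [LinearMap.mem_ker]
      apply Module.End.pow_map_zero_of_le hn1
      have hxk : (x : M) - y ∈ LinearMap.ker f := sub_mem x.2 y.2
      simpa [pow_one] using hxk
    have h0 : (x : M) - y = 0 := Submodule.disjoint_def.mp hn2 _ hk hxy
    exact Subtype.ext (sub_eq_zero.mp h0)
  exact Finite.of_injective _ hinj

end ModuleAux

section MainAux

variable {G : Type*} [Group G]

theorem backward_direction (φ ψ : G →* G)
    (h1 : Finite (Quot (twistRel (abelianizationMap φ) (abelianizationMap ψ))))
    (h2 : ∀ g : G, Finite (Quot (twistRel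
      (restrictCommutator ((MulAut.conj g).toMonoidHom.comp φ))
      (restrictCommutator ψ)))) :
    Finite (Quot (twistRel φ ψ)) := by
  classical
  let gr : Quot (twistRel (abelianizationMap φ) (abelianizationMap ψ)) → G :=
    fun c => (Quot.out c).out
  haveI := h1
  haveI hfib : ∀ c : Quot (twistRel (abelianizationMap φ) (abelianizationMap ψ)),
      Finite (Quot (twistRel
      (restrictCommutator ((MulAut.conj (gr c)).toMonoidHom.comp φ))
      (restrictCommutator ψ))) := fun c => h2 (gr c)
  let T := Σ c : Quot (twistRel (abelianizationMap φ) (abelianizationMap ψ)), Quot (twistRel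
      (restrictCommutator ((MulAut.conj (gr c)).toMonoidHom.comp φ))
      (restrictCommutator ψ))
  haveI : Finite T := by
    exact Finite.instSigma
  let Φ : T → Quot (twistRel φ ψ) := fun cd =>
    Quot.mk _ (((Quot.out cd.2 : commutator G) : G) * gr cd.1)
  have hΦ : Function.Surjective Φ := by
    intro x
    induction x using Quot.ind with
    | _ a =>
    set c : Quot (twistRel (abelianizationMap φ) (abelianizationMap ψ)) :=
      Quot.mk _ ((a : G) : G ⧸ commutator G) with hc
    have h3 : Quot.mk (twistRel (abelianizationMap φ) (abelianizationMap ψ))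
        (((gr c : G) : G ⧸ commutator G))
        = Quot.mk (twistRel (abelianizationMap φ) (abelianizationMap ψ))
        ((a : G) : G ⧸ commutator G) := by
      have h4 : ((gr c : G) : G ⧸ commutator G) = Quot.out c := QuotientGroup.out_eq' _
      rw [h4, Quot.out_eq, hc]
    obtain ⟨hb, e⟩ := (twistRel_equivalence (abelianizationMap φ)
      (abelianizationMap ψ)).symm (twist_mk_eq.mp h3)
    obtain ⟨h, rfl⟩ := QuotientGroup.mk'_surjective (commutator G) hb
    simp only [QuotientGroup.mk'_apply] at e
    set b : G := (ψ h)⁻¹ * a * φ h with hbdef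
    have hπb : ((b : G) : G ⧸ commutator G) = ((gr c : G) : G ⧸ commutator G) := by
      rw [hbdef]
      rw [QuotientGroup.mk_mul, QuotientGroup.mk_mul, QuotientGroup.mk_inv,
        mk_abelianizationMap ψ h, mk_abelianizationMap φ h]
      rw [e]
      group
    have hmem : b * (gr c)⁻¹ ∈ commutator G := by
      rw [← QuotientGroup.eq_one_iff]
      rw [QuotientGroup.mk_mul, QuotientGroup.mk_inv, hπb]
      exact mul_inv_cancel _
    set n : commutator G := ⟨b * (gr c)⁻¹, hmem⟩ with hn
    let d : Quot (twistRel
        (restrictCommutator ((MulAut.conj (gr c)).toMonoidHom.comp φ))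
        (restrictCommutator ψ)) := Quot.mk _ n
    refine ⟨⟨c, d⟩, ?_⟩
    have hrel0 := twist_mk_eq.mp (Quot.out_eq d)
    have hrel1 : twistRel φ ψ (((Quot.out d : commutator G) : G) * gr c) ((n : G) * gr c) :=
      twistRel_mul_of_twistRel_commutator φ ψ (gr c) hrel0
    have hng : (n : G) * gr c = b := by
      rw [hn]
      simp [mul_assoc]
    have hab : twistRel φ ψ a b := ⟨h, by rw [hbdef]; group⟩
    show Quot.mk (twistRel φ ψ) (((Quot.out d : commutator G) : G) * gr c) = Quot.mk _ a
    rw [twist_mk_eq]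
    refine (twistRel_equivalence φ ψ).trans ?_ ((twistRel_equivalence φ ψ).symm hab)
    rw [hng] at hrel1
    exact hrel1
  exact Finite.of_surjective Φ hΦ

theorem forward_commutator (hGfg : Group.FG G) (φ ψ : G →* G)
    (hfin : Finite (Quot (twistRel φ ψ)))
    (habel : Finite (Quot (twistRel (abelianizationMap φ) (abelianizationMap ψ))))
    (g : G) :
    Finite (Quot (twistRel
      (restrictCommutator ((MulAut.conj g).toMonoidHom.comp φ))
      (restrictCommutator ψ))) := by
  classical
  letI cgQ : CommGroup (G ⧸ commutator G) :=
    { (inferInstance : Group (G ⧸ commutator G)) with mul_comm := quot_commutator_comm }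
  let θ : (G ⧸ commutator G) →* (G ⧸ commutator G) :=
    { toFun := fun q => abelianizationMap ψ q * (abelianizationMap φ q)⁻¹
      map_one' := by simp
      map_mul' := fun a b => by
        simp only [map_mul, mul_inv]
        exact mul_mul_mul_comm _ _ _ _ }
  haveI := hGfg
  haveI hQfg : Group.FG (G ⧸ commutator G) :=
    Group.fg_of_surjective (QuotientGroup.mk'_surjective (commutator G))
  haveI : AddGroup.FG (Additive (G ⧸ commutator G)) := GroupFG.iff_add_fg.mp hQfg
  haveI : Module.Finite ℤ (Additive (G ⧸ commutator G)) := Module.Finite.iff_addGroup_fg.mpr ‹_›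
  let f : Additive (G ⧸ commutator G) →ₗ[ℤ] Additive (G ⧸ commutator G) :=
    (MonoidHom.toAdditive θ).toIntLinearMap
  have hcok : Finite (Additive (G ⧸ commutator G) ⧸ LinearMap.range f) := by
    have hsound : ∀ a b : G ⧸ commutator G,
        twistRel (abelianizationMap φ) (abelianizationMap ψ) a b →
        (Submodule.Quotient.mk (Additive.ofMul a) :
          Additive (G ⧸ commutator G) ⧸ LinearMap.range f)
          = Submodule.Quotient.mk (Additive.ofMul b) := by
      rintro a b ⟨h, rfl⟩
      rw [Submodule.Quotient.eq]
      refine ⟨Additive.ofMul h, ?_⟩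
      have hth : θ h = (abelianizationMap ψ h * b * (abelianizationMap φ h)⁻¹) / b := by
        show abelianizationMap ψ h * (abelianizationMap φ h)⁻¹ = _
        rw [div_eq_mul_inv, mul_assoc (abelianizationMap ψ h) b,
          quot_commutator_comm b ((abelianizationMap φ h)⁻¹), ← mul_assoc,
          mul_inv_cancel_right]
      show f (Additive.ofMul h)
          = Additive.ofMul (abelianizationMap ψ h * b * (abelianizationMap φ h)⁻¹)
            - Additive.ofMul b
      rw [← ofMul_div, ← hth]
      rfl
    let F : Quot (twistRel (abelianizationMap φ) (abelianizationMap ψ)) →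
        Additive (G ⧸ commutator G) ⧸ LinearMap.range f :=
      Quot.lift (fun a => Submodule.Quotient.mk (Additive.ofMul a)) hsound
    have hFs : Function.Surjective F := by
      intro x
      obtain ⟨m, rfl⟩ := Submodule.Quotient.mk_surjective _ x
      exact ⟨Quot.mk _ (Additive.toMul m), rfl⟩
    exact Finite.of_surjective F hFs
  have hker : Finite (LinearMap.ker f) := finite_ker_of_finite_coker f hcok
  -- choose representatives in G for kernel elements
  let t : LinearMap.ker f → G :=
    fun k => (Additive.toMul (k : Additive (G ⧸ commutator G))).out
  have ht : ∀ k : LinearMap.ker f, ((t k : G) : G ⧸ commutator G)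
      = Additive.toMul (k : Additive (G ⧸ commutator G)) :=
    fun k => QuotientGroup.out_eq' _
  have hθk : ∀ k : LinearMap.ker f,
      abelianizationMap ψ (((t k : G) : G ⧸ commutator G))
        * (abelianizationMap φ (((t k : G) : G ⧸ commutator G)))⁻¹ = 1 := by
    intro k
    have hk2 : f (k : Additive (G ⧸ commutator G)) = 0 := k.2
    have : θ (Additive.toMul (k : Additive (G ⧸ commutator G))) = 1 := hk2
    rw [ht k]
    exact this
  let rep : Quot (twistRel φ ψ) → commutator G := fun c =>
    if h : ∃ n : commutator G, Quot.mk (twistRel φ ψ) ((n : G) * g) = c then h.choose else 1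
  have hw : ∀ (k : LinearMap.ker f) (n : commutator G),
      ψ (t k) * (n : G) * (g * φ (t k) * g⁻¹)⁻¹ ∈ commutator G := by
    intro k n
    rw [← QuotientGroup.eq_one_iff]
    simp only [QuotientGroup.mk_mul, QuotientGroup.mk_inv]
    rw [(QuotientGroup.eq_one_iff (n : G)).mpr n.2, mul_one,
      mk_abelianizationMap ψ (t k), mk_abelianizationMap φ (t k)]
    have hφψ : abelianizationMap φ (((t k : G) : G ⧸ commutator G))
        = abelianizationMap ψ (((t k : G) : G ⧸ commutator G)) :=
      (mul_inv_eq_one.mp (hθk k)).symm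
    rw [hφψ]
    rw [quot_commutator_comm ((g : G) : G ⧸ commutator G)
      (abelianizationMap ψ (((t k : G) : G ⧸ commutator G))),
      mul_inv_cancel_right, mul_inv_cancel]
  let S : Quot (twistRel φ ψ) × LinearMap.ker f →
      Quot (twistRel
        (restrictCommutator ((MulAut.conj g).toMonoidHom.comp φ))
        (restrictCommutator ψ)) :=
    fun ck => Quot.mk _
      ⟨ψ (t ck.2) * ((rep ck.1 : G)) * (g * φ (t ck.2) * g⁻¹)⁻¹, hw ck.2 (rep ck.1)⟩
  have hS : Function.Surjective S := by
    intro x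
    induction x using Quot.ind with
    | _ n =>
    set c : Quot (twistRel φ ψ) := Quot.mk _ ((n : G) * g) with hc
    have hex : ∃ n' : commutator G, Quot.mk (twistRel φ ψ) ((n' : G) * g) = c := ⟨n, rfl⟩
    have hrep : rep c = hex.choose := dif_pos hex
    have hn₀ : Quot.mk (twistRel φ ψ) ((hex.choose : G) * g) = c := hex.choose_spec
    obtain ⟨h, e⟩ := (twistRel_equivalence φ ψ).symm (twist_mk_eq.mp (hn₀.trans hc))
    -- e : (n : G) * g = ψ h * ((hex.choose : G) * g) * (φ h)⁻¹
    have hθq : abelianizationMap ψ ((h : G) : G ⧸ commutator G)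
        * (abelianizationMap φ ((h : G) : G ⧸ commutator G))⁻¹ = 1 := by
      have e' := congrArg (fun z : G => ((z : G ⧸ commutator G))) e
      simp only [QuotientGroup.mk_mul, QuotientGroup.mk_inv] at e'
      rw [(QuotientGroup.eq_one_iff (n : G)).mpr n.2,
        (QuotientGroup.eq_one_iff (hex.choose : G)).mpr hex.choose.2,
        mk_abelianizationMap ψ h, mk_abelianizationMap φ h] at e'
      simp only [one_mul] at e'
      rw [quot_commutator_comm (abelianizationMap ψ ((h : G) : G ⧸ commutator G))
        ((g : G) : G ⧸ commutator G), mul_assoc] at e'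
      exact left_eq_mul.mp e'
    let k : LinearMap.ker f := ⟨Additive.ofMul ((h : G) : G ⧸ commutator G), by
      rw [LinearMap.mem_ker]
      show Additive.ofMul (θ ((h : G) : G ⧸ commutator G)) = 0
      have : θ ((h : G) : G ⧸ commutator G) = 1 := hθq
      rw [this]
      rfl⟩
    have htk : ((t k : G) : G ⧸ commutator G) = ((h : G) : G ⧸ commutator G) := ht k
    have hm : h * (t k)⁻¹ ∈ commutator G := by
      rw [← QuotientGroup.eq_one_iff]
      rw [QuotientGroup.mk_mul, QuotientGroup.mk_inv, htk]
      exact mul_inv_cancel _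
    refine ⟨(c, k), ?_⟩
    have hwit : twistRel
        (restrictCommutator ((MulAut.conj g).toMonoidHom.comp φ))
        (restrictCommutator ψ) n
        ⟨ψ (t k) * ((hex.choose : G)) * (g * φ (t k) * g⁻¹)⁻¹, hw k hex.choose⟩ := by
      refine ⟨⟨h * (t k)⁻¹, hm⟩, ?_⟩
      apply Subtype.ext
      push_cast
      rw [coe_restrictCommutator, coe_restrictCommutator_conj]
      have en : (n : G) = ψ h * (hex.choose : G) * g * (φ h)⁻¹ * g⁻¹ := by
        have e2 := congrArg (fun z => z * g⁻¹) e
        simpa [mul_assoc] using e2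
      rw [en]
      simp only [map_mul, map_inv]
      group
    show Quot.mk _
        (⟨ψ (t k) * ((rep c : G)) * (g * φ (t k) * g⁻¹)⁻¹, hw k (rep c)⟩ : commutator G)
        = Quot.mk _ n
    rw [hrep]
    exact twist_mk_eq.mpr ((twistRel_equivalence _ _).symm hwit)
  haveI := hfin
  exact Finite.of_surjective S hS

end MainAux

/-- for a polycyclic group G, R(φ,ψ) < ∞ iff R(φ̄,ψ̄) < ∞ and
    R(ι_g∘φ|_{G'}, ψ|_{G'}) < ∞ for every g ∈ G. -/
theorem reidNr_finite_iff_polycyclic {G : Type*} [Group G]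
    (hpoly : Nonempty (PolySeries G)) (φ ψ : G →* G) :
    Finite (Quot (twistRel φ ψ)) ↔
      (Finite (Quot (twistRel (abelianizationMap φ) (abelianizationMap ψ))) ∧
        ∀ g : G, Finite (Quot (twistRel
          (restrictCommutator ((MulAut.conj g).toMonoidHom.comp φ))
          (restrictCommutator ψ)))) := by
  obtain ⟨p⟩ := hpoly
  have hGfg : Group.FG G := polySeries_fg p
  constructor
  · intro hfin
    have habel : Finite (Quot (twistRel (abelianizationMap φ) (abelianizationMap ψ))) :=
      finite_twist_quot_of_surjective φ ψ (abelianizationMap φ) (abelianizationMap ψ)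
        (QuotientGroup.mk' (commutator G)) (QuotientGroup.mk'_surjective _)
        (fun x => mk_abelianizationMap φ x) (fun x => mk_abelianizationMap ψ x) hfin
    exact ⟨habel, fun g => forward_commutator hGfg φ ψ hfin habel g⟩
  · rintro ⟨h1, h2⟩
    exact backward_direction φ ψ h1 h2
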